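/- Let h0, p : ℝ≥0 × ℝ^n → ℝ^n be continuous, suppose the unperturbed system x' = h0(t,x) admits a continuously differentiable Lyapunov function V with c1‖x‖² ≤ V(t,x) ≤ c2‖x‖², ∂V/∂t + (∂V/∂x)·h0(t,x) ≤ -c3‖x‖², and ‖∂V/∂x‖ ≤ c4‖x‖ for ‖x‖ < d, and suppose ‖p(t,x)‖ ≤ δ̄ for all t and ‖x‖ < d, where δ̄ < (c3/c4)√(c1/c2) d. Then every solution of the perturbed system x' = h0(t,x) + p(t,x) with ‖x(0)‖ < √(c1/c2) d satisfies limsup_{t→∞} ‖x(t)‖ ≤ (c4/c3)√(c2/c1) δ̄; in particular there exists T > 0 such that ‖x(t)‖ < (c4/c3)√(c2/c1) δ̄ + ρ' for all t ≥ T and any ρ' > 0. -/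

import Mathlib

open Filter

lemma deriv_neg_right {W : ℝ → ℝ} {w s : ℝ} (hW : HasDerivAt W w s) (hw : w < 0) :
    ∀ᶠ t in nhdsWithin s (Set.Ioi s), W t < W s := by
  have hslope : Filter.Tendsto (slope W s) (nhdsWithin s {s}ᶜ) (nhds w) :=
    hasDerivAt_iff_tendsto_slope.1 hW
  have h1 : ∀ᶠ t in nhdsWithin s {s}ᶜ, slope W s t < 0 :=
    hslope.eventually_lt_const hw
  have h2 : ∀ᶠ t in nhdsWithin s (Set.Ioi s), slope W s t < 0 :=
    h1.filter_mono (nhdsWithin_mono s (fun t ht => ne_of_gt ht))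
  filter_upwards [h2, self_mem_nhdsWithin] with t ht (hts : t ∈ Set.Ioi s)
  have hts' : 0 < t - s := sub_pos.2 hts
  have : (W t - W s) / (t - s) < 0 := by rwa [slope_def_field] at ht
  rcases div_neg_iff.1 this with ⟨h3,_⟩|⟨_,h3⟩
  · linarith
  · linarith

lemma barrier {W w : ℝ → ℝ} {a L : ℝ}
    (hW : ∀ t, a ≤ t → HasDerivAt W (w t) t)
    (hneg : ∀ t, a ≤ t → W t = L → w t < 0)
    (ha : W a ≤ L) : ∀ t, a ≤ t → W t ≤ L := by
  intro t1 hat1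
  by_contra hWt1
  push_neg at hWt1
  have hcont : ∀ t, a ≤ t → ContinuousAt W t := fun t ht => (hW t ht).continuousAt
  set S : Set ℝ := {t | t ∈ Set.Icc a t1 ∧ W t ≤ L} with hS
  have hSne : S.Nonempty := ⟨a, ⟨le_refl a, hat1⟩, ha⟩
  have hSbdd : BddAbove S := ⟨t1, fun t ht => ht.1.2⟩
  set s := sSup S with hs
  have hsa : a ≤ s := le_csSup hSbdd ⟨⟨le_refl a, hat1⟩, ha⟩
  have hst1 : s ≤ t1 := csSup_le hSne fun t ht => ht.1.2
  have hWs : W s ≤ L := by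
    by_contra hWs
    push_neg at hWs
    have hev : ∀ᶠ t in nhds s, L < W t := (hcont s hsa).eventually_const_lt hWs
    rcases Metric.eventually_nhds_iff.1 hev with ⟨δ, hδ, hball⟩
    obtain ⟨t, htS, hts⟩ := exists_lt_of_lt_csSup hSne (by linarith : s - δ < s)
    have htle : t ≤ s := le_csSup hSbdd htS
    have : L < W t := hball (by rw [Real.dist_eq, abs_lt]; exact ⟨by linarith, by linarith⟩)
    exact absurd htS.2 (not_le.2 this)
  have hst1' : s < t1 := lt_of_le_of_ne hst1 (by intro h; rw [h] at hWs; linarith)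
  have hgt : ∀ t, s < t → t ≤ t1 → L < W t := by
    intro t hst htt1
    by_contra hc
    push_neg at hc
    exact absurd (le_csSup hSbdd ⟨⟨hsa.trans hst.le, htt1⟩, hc⟩) (not_le.2 hst)
  have hWseq : W s = L := by
    rcases lt_or_eq_of_le hWs with hlt | heq
    · exfalso
      have hev : ∀ᶠ t in nhds s, W t < L := (hcont s hsa).eventually_lt_const hlt
      rcases Metric.eventually_nhds_iff.1 hev with ⟨δ, hδ, hball⟩
      have ht : s < min (s + δ/2) t1 := lt_min (by linarith) hst1'
      set t := min (s + δ/2) t1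
      have htle : t - s ≤ δ/2 := by
        have := min_le_left (s + δ/2) t1; simp only [t]; linarith
      have h1 : W t < L := hball (by
        rw [Real.dist_eq, abs_lt]; exact ⟨by linarith, by linarith⟩)
      exact absurd h1 (not_lt.2 (hgt t ht (min_le_right _ _)).le)
    · exact heq
  have hws := hneg s hsa hWseq
  have hev := deriv_neg_right (hW s hsa) hws
  rcases mem_nhdsGT_iff_exists_Ioo_subset.1 hev with ⟨u, hu, hsub⟩
  have hu' : s < u := hu
  have ht : s < min ((s + u)/2) t1 := lt_min (by linarith) hst1'
  set t := min ((s + u)/2) t1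
  have h1 : W t < W s := hsub ⟨ht, by
    calc t ≤ (s+u)/2 := min_le_left _ _
    _ < u := by linarith⟩
  rw [hWseq] at h1
  exact absurd h1 (not_lt.2 (hgt t ht (min_le_right _ _)).le)

lemma decrease {W w : ℝ → ℝ} {k a b : ℝ} (hab : a ≤ b)
    (hW : ∀ t ∈ Set.Icc a b, HasDerivAt W (w t) t)
    (hw : ∀ t ∈ Set.Icc a b, w t ≤ -k) : W b ≤ W a - k * (b - a) := by
  set g : ℝ → ℝ := fun t => W t + k * t with hg
  have hg' : ∀ t ∈ Set.Icc a b, HasDerivAt g (w t + k) t := fun t ht =>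
    ((hW t ht).add (((hasDerivAt_id t).const_mul k).congr_deriv (mul_one k)))
  have hanti : AntitoneOn g (Set.Icc a b) := by
    apply antitoneOn_of_deriv_nonpos (convex_Icc a b)
    · exact fun t ht => (hg' t ht).continuousAt.continuousWithinAt
    · intro t ht
      rw [interior_Icc] at ht
      exact ((hg' t (Set.mem_Icc_of_Ioo ht)).differentiableAt).differentiableWithinAt
    · intro t ht
      rw [interior_Icc] at ht
      rw [(hg' t (Set.mem_Icc_of_Ioo ht)).deriv]
      linarith [hw t (Set.mem_Icc_of_Ioo ht)]
  have := hanti (Set.left_mem_Icc.2 hab) (Set.right_mem_Icc.2 hab) hab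
  simp only [hg] at this
  linarith

set_option maxHeartbeats 2000000 in
theorem stmt_18 {n : ℕ}
    (h0 p : ℝ → EuclideanSpace ℝ (Fin n) → EuclideanSpace ℝ (Fin n))
    (hh0 : Continuous fun q : ℝ × EuclideanSpace ℝ (Fin n) => h0 q.1 q.2)
    (hp : Continuous fun q : ℝ × EuclideanSpace ℝ (Fin n) => p q.1 q.2)
    (V : ℝ → EuclideanSpace ℝ (Fin n) → ℝ)
    (Vt : ℝ → EuclideanSpace ℝ (Fin n) → ℝ)
    (Vx : ℝ → EuclideanSpace ℝ (Fin n) → (EuclideanSpace ℝ (Fin n) →L[ℝ] ℝ))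
    (hV' : ∀ (t : ℝ) (x : EuclideanSpace ℝ (Fin n)),
      HasFDerivAt (fun q : ℝ × EuclideanSpace ℝ (Fin n) => V q.1 q.2)
        ((Vt t x) • (ContinuousLinearMap.fst ℝ ℝ (EuclideanSpace ℝ (Fin n)))
          + (Vx t x).comp (ContinuousLinearMap.snd ℝ ℝ (EuclideanSpace ℝ (Fin n)))) (t, x))
    (c1 c2 c3 c4 d δbar : ℝ)
    (hc1 : 0 < c1) (hc2 : 0 < c2) (hc3 : 0 < c3) (hc4 : 0 < c4) (hd : 0 < d)
    (hVlb : ∀ t x, ‖x‖ < d → c1 * ‖x‖ ^ 2 ≤ V t x)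
    (hVub : ∀ t x, ‖x‖ < d → V t x ≤ c2 * ‖x‖ ^ 2)
    (hVdec : ∀ t x, 0 ≤ t → ‖x‖ < d → Vt t x + Vx t x (h0 t x) ≤ -c3 * ‖x‖ ^ 2)
    (hVgrad : ∀ t x, 0 ≤ t → ‖x‖ < d → ‖Vx t x‖ ≤ c4 * ‖x‖)
    (hpbound : ∀ t x, 0 ≤ t → ‖x‖ < d → ‖p t x‖ ≤ δbar)
    (hδbar : 0 ≤ δbar ∧ δbar < (c3 / c4) * Real.sqrt (c1 / c2) * d) :
    ∀ x : ℝ → EuclideanSpace ℝ (Fin n),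
      (∀ t, 0 ≤ t → HasDerivAt x (h0 t (x t) + p t (x t)) t) →
      ‖x 0‖ < Real.sqrt (c1 / c2) * d →
      (Filter.limsup (fun t => ‖x t‖) Filter.atTop
          ≤ (c4 / c3) * Real.sqrt (c2 / c1) * δbar) ∧
        ∀ ρ' > (0 : ℝ), ∃ T > (0 : ℝ), ∀ t ≥ T,
          ‖x t‖ < (c4 / c3) * Real.sqrt (c2 / c1) * δbar + ρ' := by
  obtain ⟨hδ0, hδlt⟩ := hδbar
  intro x hx hx0
  rcases Nat.eq_zero_or_pos n with hn | hn
  · subst hn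
    have hx0' : ∀ t, ‖x t‖ = 0 := fun t => by
      rw [Subsingleton.elim (x t) 0, norm_zero]
    have hb : 0 ≤ (c4/c3) * Real.sqrt (c2/c1) * δbar :=
      mul_nonneg (mul_nonneg (div_pos hc4 hc3).le (Real.sqrt_nonneg _)) hδ0
    constructor
    · have heq : (fun t => ‖x t‖) = fun _ => (0:ℝ) := funext hx0'
      rw [heq, limsup_const]
      exact hb
    · intro ρ' hρ'
      exact ⟨1, one_pos, fun t _ => by rw [hx0' t]; linarith⟩
  -- main case: n > 0
  have hc12 : c1 ≤ c2 := by
    set v : EuclideanSpace ℝ (Fin n) := EuclideanSpace.single ⟨0, hn⟩ (d/2) with hv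
    have hvn : ‖v‖ = d/2 := by
      rw [hv, EuclideanSpace.norm_single, Real.norm_eq_abs, abs_of_pos (by linarith)]
    have hvd : ‖v‖ < d := by rw [hvn]; linarith
    have h1 := hVlb 0 v hvd
    have h2 := hVub 0 v hvd
    rw [hvn] at h1 h2
    have hdd : 0 < (d/2)^2 := by positivity
    by_contra hcc
    push_neg at hcc
    have := mul_lt_mul_of_pos_right hcc hdd
    linarith
  have hs12 : (0:ℝ) < c1 / c2 := div_pos hc1 hc2
  have hspos : 0 < Real.sqrt (c1/c2) := Real.sqrt_pos.2 hs12
  have hs'pos : 0 < Real.sqrt (c2/c1) := Real.sqrt_pos.2 (div_pos hc2 hc1)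
  have hsle1 : Real.sqrt (c1/c2) ≤ 1 := by
    rw [show (1:ℝ) = Real.sqrt 1 by rw [Real.sqrt_one]]
    exact Real.sqrt_le_sqrt (by rw [div_le_one hc2]; exact hc12)
  have hssmul : Real.sqrt (c2/c1) * Real.sqrt (c1/c2) = 1 := by
    rw [← Real.sqrt_mul (div_pos hc2 hc1).le,
      show c2/c1 * (c1/c2) = 1 by field_simp, Real.sqrt_one]
  have hsq : Real.sqrt (c1/c2) ^ 2 = c1/c2 := Real.sq_sqrt hs12.le
  have hsq' : Real.sqrt (c2/c1) ^ 2 = c2/c1 := Real.sq_sqrt (div_pos hc2 hc1).le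
  set sd := Real.sqrt (c1/c2) * d with hsd
  set μ := c4 * δbar / c3 with hμ
  have hμ0 : 0 ≤ μ := div_nonneg (mul_nonneg hc4.le hδ0) hc3.le
  have hμsd : μ < sd := by
    rw [hμ, div_lt_iff₀ hc3]
    have h := mul_lt_mul_of_pos_left hδlt hc4
    calc c4 * δbar < c4 * (c3/c4 * Real.sqrt (c1/c2) * d) := h
    _ = sd * c3 := by rw [hsd]; field_simp
  have hsdd : sd ≤ d := by
    rw [hsd]
    calc Real.sqrt (c1/c2) * d ≤ 1 * d := mul_le_mul_of_nonneg_right hsle1 hd.le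
    _ = d := one_mul d
  have hx0d : ‖x 0‖ < d := lt_of_lt_of_le hx0 hsdd
  set b := (c4/c3) * Real.sqrt (c2/c1) * δbar with hb
  have hbμ : b = Real.sqrt (c2/c1) * μ := by rw [hb, hμ]; ring
  set W : ℝ → ℝ := fun t => V t (x t) with hWdef
  set w : ℝ → ℝ := fun t => Vt t (x t) + Vx t (x t) (h0 t (x t) + p t (x t)) with hwdef
  have hWd : ∀ t, 0 ≤ t → HasDerivAt W (w t) t := by
    intro t ht
    have hF : HasDerivAt (fun t => ((t, x t) : ℝ × EuclideanSpace ℝ (Fin n)))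
        (1, h0 t (x t) + p t (x t)) t := (hasDerivAt_id t).prodMk (hx t ht)
    have h2 := (hV' t (x t)).comp_hasDerivAt t hF
    have h5 : ((Vt t (x t)) • (ContinuousLinearMap.fst ℝ ℝ (EuclideanSpace ℝ (Fin n)))
        + (Vx t (x t)).comp (ContinuousLinearMap.snd ℝ ℝ (EuclideanSpace ℝ (Fin n))))
        (1, h0 t (x t) + p t (x t)) = w t := by
      simp [hwdef, ContinuousLinearMap.add_apply, ContinuousLinearMap.smul_apply,
        ContinuousLinearMap.comp_apply, ContinuousLinearMap.coe_fst',
        ContinuousLinearMap.coe_snd', smul_eq_mul, mul_one]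
    exact h2.congr_deriv h5
  have hc3μ : c3 * μ = c4 * δbar := by rw [hμ]; field_simp
  have hwle : ∀ t, 0 ≤ t → ‖x t‖ < d → w t ≤ -c3 * ‖x t‖^2 + c3 * μ * ‖x t‖ := by
    intro t ht hxd
    have h1 := hVdec t (x t) ht hxd
    have h2 : |Vx t (x t) (p t (x t))| ≤ (c4 * ‖x t‖) * δbar := by
      calc |Vx t (x t) (p t (x t))| = ‖Vx t (x t) (p t (x t))‖ := (Real.norm_eq_abs _).symm
      _ ≤ ‖Vx t (x t)‖ * ‖p t (x t)‖ := (Vx t (x t)).le_opNorm _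
      _ ≤ (c4 * ‖x t‖) * δbar :=
          mul_le_mul (hVgrad t (x t) ht hxd) (hpbound t (x t) ht hxd)
            (norm_nonneg _) (mul_nonneg hc4.le (norm_nonneg _))
    have h3 : Vx t (x t) (h0 t (x t) + p t (x t))
        = Vx t (x t) (h0 t (x t)) + Vx t (x t) (p t (x t)) := map_add _ _ _
    have h4 := le_abs_self (Vx t (x t) (p t (x t)))
    have h6 : c3 * μ * ‖x t‖ = (c4 * ‖x t‖) * δbar := by rw [hc3μ]; ring
    rw [hwdef]
    simp only []
    rw [h3]
    linarith [h1, h2, h4, h6]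
  clear hh0 hp hVdec hVgrad hpbound hV'
  have key : ∀ ρ' : ℝ, 0 < ρ' → ∃ T, 0 < T ∧ ∀ t, T ≤ t → ‖x t‖ < b + ρ' := by
    intro ρ' hρ'
    set ε := min ((sd - μ)/2) (ρ' * Real.sqrt (c1/c2) / 2) with hε
    have hε0 : 0 < ε := lt_min (by linarith) (by positivity)
    have hεsd : μ + ε < sd := by
      have h := min_le_left ((sd - μ)/2) (ρ' * Real.sqrt (c1/c2) / 2)
      rw [← hε] at h; linarith
    have hμε0 : 0 ≤ μ + ε := by linarith
    have hεboth : Real.sqrt (c2/c1) * ε < ρ' := by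
      have h1 := min_le_right ((sd - μ)/2) (ρ' * Real.sqrt (c1/c2) / 2)
      rw [← hε] at h1
      have h2 : Real.sqrt (c2/c1) * ε ≤ Real.sqrt (c2/c1) * (ρ' * Real.sqrt (c1/c2) / 2) :=
        mul_le_mul_of_nonneg_left h1 hs'pos.le
      have h3 : Real.sqrt (c2/c1) * (ρ' * Real.sqrt (c1/c2) / 2) = ρ'/2 := by
        calc Real.sqrt (c2/c1) * (ρ' * Real.sqrt (c1/c2) / 2)
            = (Real.sqrt (c2/c1) * Real.sqrt (c1/c2)) * (ρ'/2) := by ring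
        _ = ρ'/2 := by rw [hssmul]; ring
      linarith
    set L := c2 * (μ + ε)^2 with hL
    set L0 := max (W 0) L with hL0
    have hLpos : 0 ≤ L := mul_nonneg hc2.le (sq_nonneg _)
    have hc2sd : c2 * sd^2 = c1 * d^2 := by
      rw [hsd, mul_pow, hsq]; field_simp
    have hL0d : L0 < c1 * d^2 := by
      apply max_lt
      · have h1 := hVub 0 (x 0) hx0d
        have h2 : ‖x 0‖^2 < sd^2 := by
          rw [pow_two, pow_two]
          exact mul_self_lt_mul_self (norm_nonneg (x 0)) hx0
        calc W 0 ≤ c2 * ‖x 0‖^2 := h1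
        _ < c2 * sd^2 := (mul_lt_mul_iff_right₀ hc2).2 h2
        _ = c1 * d^2 := hc2sd
      · have h2 : (μ+ε)^2 < sd^2 := by
          rw [pow_two, pow_two]
          exact mul_self_lt_mul_self hμε0 hεsd
        calc L = c2 * (μ+ε)^2 := hL
        _ < c2 * sd^2 := (mul_lt_mul_iff_right₀ hc2).2 h2
        _ = c1 * d^2 := hc2sd
    set k := c3 * ((μ + ε) * ε) with hk
    have hkpos : 0 < k := mul_pos hc3 (mul_pos (by linarith) hε0)
    have hwk : ∀ t, 0 ≤ t → ‖x t‖ < d → μ + ε ≤ ‖x t‖ → w t ≤ -k := by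
      intro t ht hxd hxge
      have h1 := hwle t ht hxd
      have h2 : 0 ≤ ‖x t‖ - μ := by linarith
      have h3 : (0:ℝ) ≤ (‖x t‖ - (μ+ε)) * (‖x t‖ - μ) :=
        mul_nonneg (by linarith) h2
      have h4 : (0:ℝ) ≤ (μ+ε) * (‖x t‖ - μ - ε) :=
        mul_nonneg hμε0 (by linarith)
      rw [hk]
      have h5 := mul_le_mul_of_nonneg_left (add_nonneg h3 h4) hc3.le
      linarith only [h1, h5]
    have hinv : ∀ t, 0 ≤ t → ‖x t‖ < d ∧ W t ≤ L0 := by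
      intro t0 ht0
      by_contra hbad0
      set B := {t : ℝ | 0 ≤ t ∧ ¬(‖x t‖ < d ∧ W t ≤ L0)} with hBdef
      have hBne : B.Nonempty := ⟨t0, ht0, hbad0⟩
      have hBbd : BddBelow B := ⟨0, fun t ht => ht.1⟩
      set s := sInf B with hsdef
      have hs0 : 0 ≤ s := le_csInf hBne fun t ht => ht.1
      have hgood_lt : ∀ t, 0 ≤ t → t < s → ‖x t‖ < d ∧ W t ≤ L0 := by
        intro t h1 h2
        by_contra hng
        exact absurd (csInf_le hBbd ⟨h1, hng⟩) (not_le.2 h2)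
      have hWle0 : W 0 ≤ L0 := le_max_left _ _
      have hgs : ‖x s‖ < d ∧ W s ≤ L0 := by
        rcases eq_or_lt_of_le hs0 with hseq | hspos'
        · rw [← hseq]
          exact ⟨hx0d, hWle0⟩
        · have hr : ∀ t, 0 ≤ t → t < s → ‖x t‖ ≤ Real.sqrt (L0/c1) := by
            intro t h1 h2
            obtain ⟨hxd, hWt⟩ := hgood_lt t h1 h2
            have hlb := hVlb t (x t) hxd
            have hX2 : ‖x t‖^2 ≤ L0/c1 := by
              rw [le_div_iff₀ hc1]; linarith [hlb, hWt]
            calc ‖x t‖ = Real.sqrt (‖x t‖^2) := (Real.sqrt_sq (norm_nonneg _)).symm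
            _ ≤ Real.sqrt (L0/c1) := Real.sqrt_le_sqrt hX2
          have hL00 : 0 ≤ L0 := le_trans hLpos (le_max_right _ _)
          have hrd : Real.sqrt (L0/c1) < d := by
            rw [show d = Real.sqrt (d^2) by rw [Real.sqrt_sq hd.le]]
            apply Real.sqrt_lt_sqrt (div_nonneg hL00 hc1.le)
            rw [div_lt_iff₀ hc1]; linarith [hL0d]
          have htendx : Filter.Tendsto (fun t => ‖x t‖) (nhdsWithin s (Set.Iio s)) (nhds ‖x s‖) :=
            ((hx s hs0).continuousAt.norm).tendsto.mono_left nhdsWithin_le_nhds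
          have hxs_le : ‖x s‖ ≤ Real.sqrt (L0/c1) := by
            apply le_of_tendsto htendx
            filter_upwards [Ioo_mem_nhdsLT hspos'] with t ht
            exact hr t ht.1.le ht.2
          have htendW : Filter.Tendsto W (nhdsWithin s (Set.Iio s)) (nhds (W s)) :=
            (hWd s hs0).continuousAt.tendsto.mono_left nhdsWithin_le_nhds
          have hWs_le : W s ≤ L0 := by
            apply le_of_tendsto htendW
            filter_upwards [Ioo_mem_nhdsLT hspos'] with t ht
            exact (hgood_lt t ht.1.le ht.2).2
          exact ⟨lt_of_le_of_lt hxs_le hrd, hWs_le⟩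
      have hsnB : s ∉ B := fun hmem => hmem.2 hgs
      have hevd : ∀ᶠ t in nhds s, ‖x t‖ < d :=
        Filter.Tendsto.eventually_lt_const hgs.1 ((hx s hs0).continuousAt.norm)
      have hevgood : ∀ᶠ t in nhdsWithin s (Set.Ioi s), ‖x t‖ < d ∧ W t ≤ L0 := by
        rcases lt_or_eq_of_le hgs.2 with hlt | heq
        · have hevW : ∀ᶠ t in nhds s, W t < L0 :=
            Filter.Tendsto.eventually_lt_const hlt (hWd s hs0).continuousAt
          filter_upwards [Filter.Eventually.filter_mono nhdsWithin_le_nhds (hevd.and hevW)]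
            with t ht
          exact ⟨ht.1, ht.2.le⟩
        · have hLle : L ≤ W s := by rw [heq]; exact le_max_right _ _
          have hxge : μ + ε ≤ ‖x s‖ := by
            have h1 := hVub s (x s) hgs.1
            rw [hL] at hLle
            have h2 : (μ+ε)^2 ≤ ‖x s‖^2 := (mul_le_mul_iff_right₀ hc2).1 (le_trans hLle h1)
            have h5 := Real.sqrt_le_sqrt h2
            rwa [Real.sqrt_sq hμε0, Real.sqrt_sq (norm_nonneg _)] at h5
          have hws : w s < 0 := lt_of_le_of_lt (hwk s hs0 hgs.1 hxge) (by linarith)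
          have hevW := deriv_neg_right (hWd s hs0) hws
          filter_upwards [hevW, Filter.Eventually.filter_mono nhdsWithin_le_nhds hevd]
            with t h1 h2
          exact ⟨h2, by rw [← heq]; exact h1.le⟩
      rcases mem_nhdsGT_iff_exists_Ioo_subset.1 hevgood with ⟨u, hu, hsub⟩
      have hu' : s < u := hu
      obtain ⟨t, htB, htu⟩ := exists_lt_of_csInf_lt hBne (show sInf B < u from hu')
      have hts : s ≤ t := csInf_le hBbd htB
      have htne : t ≠ s := fun h => hsnB (h ▸ htB)
      exact htB.2 (hsub ⟨lt_of_le_of_ne hts (Ne.symm htne), htu⟩)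
    have hWlb : ∀ t, 0 ≤ t → c1 * ‖x t‖^2 ≤ W t := fun t ht => hVlb t (x t) (hinv t ht).1
    have hxge_of_L : ∀ t, 0 ≤ t → L ≤ W t → μ + ε ≤ ‖x t‖ := by
      intro t ht hLW
      have h1 := hVub t (x t) (hinv t ht).1
      rw [hL] at hLW
      have h2 : (μ+ε)^2 ≤ ‖x t‖^2 := (mul_le_mul_iff_right₀ hc2).1 (le_trans hLW h1)
      have h5 := Real.sqrt_le_sqrt h2
      rwa [Real.sqrt_sq hμε0, Real.sqrt_sq (norm_nonneg _)] at h5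
    have hW0 : 0 ≤ W 0 := le_trans (by positivity) (hWlb 0 le_rfl)
    set T1 := (W 0 + 1)/k with hT1
    have hT1pos : 0 < T1 := div_pos (by linarith) hkpos
    have hentry : ∃ t0, 0 ≤ t0 ∧ W t0 ≤ L := by
      by_contra hno
      push_neg at hno
      have hder : ∀ t ∈ Set.Icc 0 T1, HasDerivAt W (w t) t := fun t ht => hWd t ht.1
      have hwle' : ∀ t ∈ Set.Icc 0 T1, w t ≤ -k := fun t ht =>
        hwk t ht.1 (hinv t ht.1).1 (hxge_of_L t ht.1 (hno t ht.1).le)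
      have hdec := decrease hT1pos.le hder hwle'
      have h2 := hWlb T1 hT1pos.le
      have h3 : k * T1 = W 0 + 1 := by
        rw [hT1]; field_simp
      have h4 : 0 ≤ c1 * ‖x T1‖^2 := by positivity
      linarith [hdec, h2, h3, h4]
    obtain ⟨t0, ht0, hWt0⟩ := hentry
    have hbar : ∀ t, t0 ≤ t → W t ≤ L := by
      apply barrier (fun t ht => hWd t (ht0.trans ht)) ?_ hWt0
      intro t ht hWtL
      exact lt_of_le_of_lt (hwk t (ht0.trans ht) (hinv t (ht0.trans ht)).1
        (hxge_of_L t (ht0.trans ht) hWtL.ge)) (by linarith)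
    refine ⟨t0 + 1, by linarith, ?_⟩
    intro t ht
    have ht' : 0 ≤ t := by linarith
    have h1 := hWlb t ht'
    have h2 := hbar t (by linarith)
    rw [hL] at h2
    have h3 : ‖x t‖^2 ≤ (Real.sqrt (c2/c1) * (μ+ε))^2 := by
      rw [mul_pow, hsq', div_mul_eq_mul_div, le_div_iff₀ hc1]
      linarith [h1, h2]
    have h4 : ‖x t‖ ≤ Real.sqrt (c2/c1) * (μ+ε) := by
      have h5 := Real.sqrt_le_sqrt h3
      rwa [Real.sqrt_sq (norm_nonneg _),
        Real.sqrt_sq (mul_nonneg hs'pos.le hμε0)] at h5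
    have h6 : Real.sqrt (c2/c1) * (μ+ε) = b + Real.sqrt (c2/c1)*ε := by
      rw [hbμ]; ring
    linarith
  constructor
  · have hcob : Filter.IsCoboundedUnder (· ≤ ·) Filter.atTop (fun t => ‖x t‖) :=
      Filter.isCoboundedUnder_le_of_eventually_le Filter.atTop
        (Filter.Eventually.of_forall fun t => norm_nonneg _)
    apply le_of_forall_pos_le_add
    intro ρ' hρ'
    obtain ⟨T, hT, hbound⟩ := key ρ' hρ'
    exact Filter.limsup_le_of_le hcob
      (Filter.eventually_atTop.2 ⟨T, fun t ht => (hbound t ht).le⟩)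
  · intro ρ' hρ'
    obtain ⟨T, hT, hbound⟩ := key ρ' hρ'
    exact ⟨T, hT, hbound⟩
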